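/- arXiv:2212.13978 — 4 statements merged into one kernel-verified Lean document; each statement's English description precedes it below -/
import Mathlib

section
/- Let c > 0 and d > 0 be real numbers. There exists a constant M ≥ 1, depending only on c and d, such that for every real λ with dλ ≥ c² and every t ∈ ℝ, the operator norm of the matrix exponential exp(t·M_λ) of the 2×2 real matrix M_λ = [[0, √λ], [−d√λ, −c]] satisfies ‖exp(t·M_λ)‖ ≤ M·e^{(c/2)|t|}. -/
open NormedSpace

set_option maxHeartbeats 1000000 in
set_option synthInstance.maxHeartbeats 100000 in
/-- For `c, d > 0` there is a constant `M ≥ 1`, depending only on `c` and `d`, such that for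
every real `λ` with `dλ ≥ c²` and every `t ∈ ℝ`, the operator norm of the exponential of
`t • [[0, √λ], [-d√λ, -c]]` (viewed as an operator on Euclidean `ℝ²`) is at most
`M e^{(c/2)|t|}`. -/
theorem normalized_block_group_bound (c d : ℝ) (hc : 0 < c) (hd : 0 < d) :
    ∃ M : ℝ, 1 ≤ M ∧ ∀ lam : ℝ, c ^ 2 ≤ d * lam → ∀ t : ℝ,
      ‖exp (t • (Matrix.toEuclideanCLM (𝕜 := ℝ)
          !![0, Real.sqrt lam; -d * Real.sqrt lam, -c]))‖
        ≤ M * Real.exp ((c / 2) * |t|) := by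
  have hsd : 0 < Real.sqrt d := Real.sqrt_pos.2 hd
  have hMdef : (0:ℝ) ≤ 2 * (1 + d) / Real.sqrt d := by positivity
  refine ⟨3 + 2 * (1 + d) / Real.sqrt d, by linarith, ?_⟩
  intro lam hlam t
  have hdl : 0 < d * lam := lt_of_lt_of_le (by positivity) hlam
  have hlam0 : 0 ≤ lam := nonneg_of_mul_nonneg_right hdl.le hd
  set r : ℝ := Real.sqrt lam with hr
  have hr0 : 0 ≤ r := Real.sqrt_nonneg _
  have hrr : r * r = lam := Real.mul_self_sqrt hlam0
  set ω : ℝ := Real.sqrt (d * lam - c ^ 2 / 4) with hω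
  have hωsq : ω ^ 2 = d * lam - c ^ 2 / 4 := Real.sq_sqrt (by nlinarith)
  have hωpos : 0 < ω := Real.sqrt_pos.2 (by nlinarith)
  -- the matrices
  set Nm : Matrix (Fin 2) (Fin 2) ℝ := !![c / 2, r; -d * r, -c / 2] with hNm
  have hAm : !![0, r; -d * r, -c] = (-(c / 2)) • (1 : Matrix (Fin 2) (Fin 2) ℝ) + Nm := by
    ext i j
    fin_cases i <;> fin_cases j <;> simp [hNm] <;> ring
  have hNmsq : Nm * Nm = (-(ω ^ 2)) • (1 : Matrix (Fin 2) (Fin 2) ℝ) := by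
    ext i j
    fin_cases i <;> fin_cases j <;>
      simp [hNm, Matrix.mul_apply, Fin.sum_univ_two] <;> nlinarith [hrr, hωsq]
  set Jm : Matrix (Fin 2) (Fin 2) ℝ := ω⁻¹ • Nm with hJm
  have hJmsq : Jm * Jm = -1 := by
    rw [hJm, Matrix.smul_mul, Matrix.mul_smul, smul_smul, hNmsq, smul_smul]
    have h1 : ω⁻¹ * ω⁻¹ * -ω ^ 2 = -1 := by
      field_simp
    rw [h1, neg_smul, one_smul]
  set N : EuclideanSpace ℝ (Fin 2) →L[ℝ] EuclideanSpace ℝ (Fin 2) :=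
    Matrix.toEuclideanCLM (𝕜 := ℝ) Nm with hN
  set J : EuclideanSpace ℝ (Fin 2) →L[ℝ] EuclideanSpace ℝ (Fin 2) :=
    Matrix.toEuclideanCLM (𝕜 := ℝ) Jm with hJdefn
  have hJ : J * J = -1 := by
    rw [hJdefn, ← map_mul, hJmsq, map_neg, map_one]
  -- the algebra homomorphism from ℂ
  set φ : ℂ →ₐ[ℝ] (EuclideanSpace ℝ (Fin 2) →L[ℝ] EuclideanSpace ℝ (Fin 2)) :=
    Complex.liftAux J hJ with hφ
  have hφcont : Continuous φ := φ.toLinearMap.continuous_of_finiteDimensional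
  set z : ℂ := (↑(-(c / 2) * t) : ℂ) + (↑(ω * t) : ℂ) * Complex.I with hz
  have hzre : z.re = -(c / 2) * t := by simp [hz]
  have hzim : z.im = ω * t := by simp [hz]
  have hφz : φ z = t • Matrix.toEuclideanCLM (𝕜 := ℝ) !![0, r; -d * r, -c] := by
    rw [hφ, Complex.liftAux_apply, hzre, hzim, hAm, map_add, map_smul, map_one, hJdefn, hJm,
      map_smul, ← hN]
    have e2 : (ω * t) • (ω⁻¹ • N) = t • N := by
      rw [smul_smul]
      congr 1
      field_simp
    rw [e2, smul_add, smul_smul, Algebra.algebraMap_eq_smul_one,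
      show t * -(c / 2) = -(c / 2) * t from mul_comm _ _]
  -- identify the exponential
  have hexp : exp (t • Matrix.toEuclideanCLM (𝕜 := ℝ) !![0, r; -d * r, -c])
      = φ (Complex.exp z) := by
    rw [← hφz, ← map_exp φ hφcont z]
    congr 1
    rw [Complex.exp_eq_exp_ℂ]
  -- coordinate bounds on Euclidean space
  have hcoord : ∀ (x : EuclideanSpace ℝ (Fin 2)) (i : Fin 2), |x i| ≤ ‖x‖ := by
    intro x i
    rw [EuclideanSpace.norm_eq]
    have h1 : ‖x i‖ ^ 2 ≤ ∑ j, ‖x j‖ ^ 2 :=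
      Finset.single_le_sum (f := fun j => ‖x j‖ ^ 2) (fun _ _ => sq_nonneg _)
        (Finset.mem_univ i)
    have := Real.sqrt_le_sqrt h1
    simpa [Real.sqrt_sq_eq_abs, Real.norm_eq_abs, abs_abs] using this
  have hnorm2 : ∀ y : EuclideanSpace ℝ (Fin 2), ‖y‖ ≤ |y 0| + |y 1| := by
    intro y
    rw [EuclideanSpace.norm_eq, Fin.sum_univ_two]
    calc Real.sqrt (‖y 0‖ ^ 2 + ‖y 1‖ ^ 2) ≤ Real.sqrt ((|y 0| + |y 1|) ^ 2) := by
          apply Real.sqrt_le_sqrt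
          simp only [Real.norm_eq_abs]
          nlinarith [abs_nonneg (y 0), abs_nonneg (y 1)]
      _ = |y 0| + |y 1| := by
          rw [Real.sqrt_sq (by positivity)]
  -- bound on ‖N‖
  have hNbound : ‖N‖ ≤ c + (1 + d) * r := by
    apply ContinuousLinearMap.opNorm_le_bound _ (by positivity)
    intro x
    have hNx0 : N x 0 = c / 2 * x 0 + r * x 1 := by
      show (Nm.mulVec x) 0 = _
      simp [hNm, Matrix.mulVec, dotProduct, Fin.sum_univ_two]
    have hNx1 : N x 1 = -d * r * x 0 + -(c / 2) * x 1 := by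
      show (Nm.mulVec x) 1 = _
      simp [hNm, Matrix.mulVec, dotProduct, Fin.sum_univ_two]
      ring
    have h0 := hcoord x 0
    have h1 := hcoord x 1
    have hxn : 0 ≤ ‖x‖ := norm_nonneg x
    calc ‖N x‖ ≤ |N x 0| + |N x 1| := hnorm2 _
      _ ≤ (c / 2 * |x 0| + r * |x 1|) + (d * r * |x 0| + c / 2 * |x 1|) := by
          rw [hNx0, hNx1]
          have e : ∀ a b : ℝ, 0 ≤ a → |a * b| = a * |b| := fun a b ha => by
            rw [abs_mul, abs_of_nonneg ha]
          have E0 : |c / 2 * x 0 + r * x 1| ≤ c / 2 * |x 0| + r * |x 1| := by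
            refine (abs_add_le _ _).trans ?_
            rw [e _ _ (by positivity), e _ _ hr0]
          have E1 : |-d * r * x 0 + -(c / 2) * x 1| ≤ d * r * |x 0| + c / 2 * |x 1| := by
            refine (abs_add_le _ _).trans ?_
            rw [show -d * r * x 0 = -(d * r * x 0) by ring,
              show -(c / 2) * x 1 = -(c / 2 * x 1) by ring, abs_neg, abs_neg,
              e _ _ (by positivity), e _ _ (by positivity)]
          linarith
      _ ≤ (c + (1 + d) * r) * ‖x‖ := by
          nlinarith [mul_le_mul_of_nonneg_left h0 (show (0:ℝ) ≤ c / 2 + d * r by positivity),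
            mul_le_mul_of_nonneg_left h1 (show (0:ℝ) ≤ r + c / 2 by positivity)]
  -- bound on ‖J‖
  have hJN : J = ω⁻¹ • N := by rw [hJdefn, hJm, map_smul, hN]
  have hsr : Real.sqrt (d * lam) = Real.sqrt d * r := Real.sqrt_mul hd.le lam
  have hs_le : Real.sqrt (d * lam) ≤ 2 * ω := by
    have h4 : d * lam ≤ (2 * ω) ^ 2 := by nlinarith [hωsq]
    calc Real.sqrt (d * lam) ≤ Real.sqrt ((2 * ω) ^ 2) := Real.sqrt_le_sqrt h4
      _ = 2 * ω := Real.sqrt_sq (by positivity)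
  have hc_le : c ≤ 2 * ω := by
    have : c ≤ Real.sqrt (d * lam) := (Real.le_sqrt hc.le hdl.le).2 hlam
    linarith
  have hrle : Real.sqrt d * r ≤ 2 * ω := by rw [← hsr]; exact hs_le
  have hJnorm : ‖J‖ ≤ 2 + 2 * (1 + d) / Real.sqrt d := by
    rw [hJN]
    refine (_root_.norm_smul_le ω⁻¹ N).trans ?_
    rw [Real.norm_eq_abs, abs_of_pos (inv_pos.2 hωpos), inv_mul_le_iff₀ hωpos]
    refine hNbound.trans ?_
    have h2 : (1 + d) * r ≤ 2 * (1 + d) / Real.sqrt d * ω := by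
      rw [div_mul_eq_mul_div, le_div_iff₀ hsd]
      nlinarith [hrle]
    have expand : ω * (2 + 2 * (1 + d) / Real.sqrt d)
        = 2 * ω + 2 * (1 + d) / Real.sqrt d * ω := by ring
    rw [expand]
    linarith
  have hJ0 : 0 ≤ ‖J‖ := norm_nonneg _
  -- final estimate
  set w : ℂ := Complex.exp z with hw
  have hwre : |w.re| ≤ Real.exp z.re := by
    have h5 : ‖w‖ = Real.exp z.re := by rw [hw, Complex.norm_exp]
    calc |w.re| ≤ ‖w‖ := Complex.abs_re_le_norm w
      _ = Real.exp z.re := h5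
  have hwim : |w.im| ≤ Real.exp z.re := by
    have h5 : ‖w‖ = Real.exp z.re := by rw [hw, Complex.norm_exp]
    calc |w.im| ≤ ‖w‖ := Complex.abs_im_le_norm w
      _ = Real.exp z.re := h5
  have hzre_le : z.re ≤ c / 2 * |t| := by
    rw [hzre]
    nlinarith [neg_le_abs t, hc.le, abs_nonneg t]
  have hφw : ‖φ w‖ ≤ Real.exp z.re * (1 + ‖J‖) := by
    rw [hφ, Complex.liftAux_apply]
    refine (norm_add_le _ _).trans ?_
    have n1 : ‖algebraMap ℝ (EuclideanSpace ℝ (Fin 2) →L[ℝ] EuclideanSpace ℝ (Fin 2)) w.re‖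
        ≤ |w.re| := by
      rw [Algebra.algebraMap_eq_smul_one, norm_smul, Real.norm_eq_abs]
      calc |w.re| * ‖(1 : EuclideanSpace ℝ (Fin 2) →L[ℝ] EuclideanSpace ℝ (Fin 2))‖
          ≤ |w.re| * 1 := by
            refine mul_le_mul_of_nonneg_left ?_ (abs_nonneg _)
            rw [ContinuousLinearMap.one_def]
            exact ContinuousLinearMap.norm_id_le
        _ = |w.re| := mul_one _
    have n2 : ‖w.im • J‖ ≤ |w.im| * ‖J‖ := by
      simpa [Real.norm_eq_abs] using _root_.norm_smul_le w.im J
    have := Real.exp_nonneg z.re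
    nlinarith [hwre, hwim, mul_le_mul_of_nonneg_right hwim hJ0]
  calc ‖exp (t • Matrix.toEuclideanCLM (𝕜 := ℝ) !![0, r; -d * r, -c])‖
      = ‖φ w‖ := by rw [hexp]
    _ ≤ Real.exp z.re * (1 + ‖J‖) := hφw
    _ ≤ Real.exp (c / 2 * |t|) * (3 + 2 * (1 + d) / Real.sqrt d) := by
        refine mul_le_mul (Real.exp_le_exp.2 hzre_le) (by linarith) (by linarith)
          (Real.exp_nonneg _)
    _ = (3 + 2 * (1 + d) / Real.sqrt d) * Real.exp (c / 2 * |t|) := mul_comm _ _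
end

section
/- Let Z and U be real Hilbert spaces, B : U →L Z continuous linear, 0 < ς ≤ T, and S : ℝ → (Z →L Z) with s ↦ S(s) continuous in operator norm. Suppose the Gramian W_ς := ∫_{T−ς}^{T} S(T−s) ∘ B ∘ B* ∘ S(T−s)* ds is invertible with continuous inverse. Let w, z* ∈ Z, let f : [T−ς, T] → Z be Bochner integrable with s ↦ S(T−s)f(s) integrable, and set ũ(s) = B* S(T−s)* W_ς⁻¹ (z* − S(ς)w). Then the state z_T := S(ς)w + ∫_{T−ς}^{T} S(T−s)( B ũ(s) + f(s) ) ds satisfies ‖z_T − z*‖ ≤ ∫_{T−ς}^{T} ‖S(T−s)‖·‖f(s)‖ ds. -/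
open MeasureTheory ContinuousLinearMap

/-- Error estimate for approximate controllability: with the Gramian
`W_ς = ∫_{T-ς}^T S(T-s) B B* S(T-s)* ds` invertible, steering control
`ũ(s) = B* S(T-s)* W_ς⁻¹ (z* - S(ς)w)`, and a perturbation `f`, the reached state
`z_T = S(ς)w + ∫_{T-ς}^T S(T-s)(B ũ(s) + f(s)) ds` satisfies
`‖z_T - z*‖ ≤ ∫_{T-ς}^T ‖S(T-s)‖ ‖f(s)‖ ds`. -/
theorem approximate_controllability_error_estimate {Z U : Type*}
    [NormedAddCommGroup Z] [InnerProductSpace ℝ Z] [CompleteSpace Z]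
    [NormedAddCommGroup U] [InnerProductSpace ℝ U] [CompleteSpace U]
    (B : U →L[ℝ] Z) (ς T : ℝ) (hς : 0 < ς) (hςT : ς ≤ T)
    (S : ℝ → Z →L[ℝ] Z) (hS : Continuous S)
    (W Winv : Z →L[ℝ] Z)
    (hW : W = ∫ s in (T - ς)..T,
      (S (T - s)).comp (B.comp ((adjoint B).comp (adjoint (S (T - s))))))
    (hWinv₁ : Winv.comp W = ContinuousLinearMap.id ℝ Z)
    (hWinv₂ : W.comp Winv = ContinuousLinearMap.id ℝ Z)
    (w zs : Z) (f : ℝ → Z)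
    (hf : IntervalIntegrable f volume (T - ς) T)
    (hSf : IntervalIntegrable (fun s => (S (T - s)) (f s)) volume (T - ς) T)
    (u : ℝ → U)
    (hu : ∀ s : ℝ, u s = (adjoint B) ((adjoint (S (T - s))) (Winv (zs - (S ς) w))))
    (zT : Z)
    (hzT : zT = (S ς) w + ∫ s in (T - ς)..T, (S (T - s)) (B (u s) + f s)) :
    ‖zT - zs‖ ≤ ∫ s in (T - ς)..T, ‖S (T - s)‖ * ‖f s‖ := by
  set v := Winv (zs - (S ς) w) with hv
  have hab : T - ς ≤ T := by linarith
  have hcont : Continuous fun s : ℝ =>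
      (S (T - s)).comp (B.comp ((adjoint B).comp (adjoint (S (T - s))))) := by
    have h1 : Continuous fun s : ℝ => S (T - s) :=
      hS.comp (continuous_const.sub continuous_id)
    have h2 : Continuous fun s : ℝ => adjoint (S (T - s)) :=
      (LinearIsometryEquiv.continuous (ContinuousLinearMap.adjoint (E := Z) (F := Z))).comp h1
    exact h1.clm_comp (continuous_const.clm_comp (continuous_const.clm_comp h2))
  have hWint : IntervalIntegrable
      (fun s : ℝ => (S (T - s)).comp (B.comp ((adjoint B).comp (adjoint (S (T - s))))))
      volume (T - ς) T := hcont.intervalIntegrable _ _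
  have hSBu : (fun s : ℝ => (S (T - s)) (B (u s))) =
      fun s : ℝ => ((S (T - s)).comp (B.comp ((adjoint B).comp (adjoint (S (T - s)))))) v := by
    funext s; simp [hu s, hv]
  have hSBu_int : IntervalIntegrable (fun s : ℝ => (S (T - s)) (B (u s)))
      volume (T - ς) T := by
    rw [hSBu]
    exact (hcont.clm_apply continuous_const).intervalIntegrable _ _
  have hsum : (∫ s in (T - ς)..T, (S (T - s)) (B (u s) + f s)) =
      (∫ s in (T - ς)..T, (S (T - s)) (B (u s))) +
        ∫ s in (T - ς)..T, (S (T - s)) (f s) := by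
    rw [← intervalIntegral.integral_add hSBu_int hSf]
    simp
  have hWv : (∫ s in (T - ς)..T, (S (T - s)) (B (u s))) = zs - (S ς) w := by
    rw [hSBu, ← ContinuousLinearMap.intervalIntegral_apply hWint v, ← hW, hv]
    have := congrArg (fun L : Z →L[ℝ] Z => L (zs - (S ς) w)) hWinv₂
    simpa using this
  have hkey : zT - zs = ∫ s in (T - ς)..T, (S (T - s)) (f s) := by
    rw [hzT, hsum, hWv]; abel
  rw [hkey]
  calc ‖∫ s in (T - ς)..T, (S (T - s)) (f s)‖
      ≤ ∫ s in (T - ς)..T, ‖(S (T - s)) (f s)‖ :=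
        intervalIntegral.norm_integral_le_integral_norm hab
    _ ≤ ∫ s in (T - ς)..T, ‖S (T - s)‖ * ‖f s‖ := by
        apply intervalIntegral.integral_mono_on hab hSf.norm
        · have h1 : Continuous fun s : ℝ => ‖S (T - s)‖ :=
            (hS.comp (continuous_const.sub continuous_id)).norm
          exact (hf.norm.continuousOn_mul h1.continuousOn)
        · intro s _
          exact (S (T - s)).le_opNorm (f s)
end

section
/- Let Z be a real Banach space, U a real normed space, T > 0, r > 0, delays 0 < τ₁ < … < τ_q < r < T, and impulse times 0 < t₁ < … < t_m < T. For y : [−r,T] → Z and t ∈ [0,T], the history y_t : [−r,0] → Z is y_t(θ) = y(t+θ). Let S : [0,T] → (Z →L Z) satisfy ‖S(t)‖ ≤ M for all t ∈ [0,T]; let F : [0,T] × ([−r,0] → Z) → Z satisfy ‖F(t,ψ₁) − F(t,ψ₂)‖ ≤ l·sup_{θ∈[−r,0]} ‖ψ₁(θ) − ψ₂(θ)‖; let G map q-tuples of functions [−r,0] → Z to functions [−r,0] → Z with ‖G(φ₁,…,φ_q)(s) − G(ψ₁,…,ψ_q)(s)‖ ≤ L·Σ_{i=1}^{q} ‖φᵢ(s)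 − ψᵢ(s)‖ for all s ∈ [−r,0]; let J_k : [0,T] × Z → Z satisfy ‖J_k(t,y) − J_k(t,z)‖ ≤ d_k‖y − z‖, and set N = Σ_{k=1}^{m} d_k. Fix ρ : [−r,0] → Z and z* ∈ Z, define L(y) = z* − S(T)(ρ(0) − G(y_{τ₁},…,y_{τ_q})(0)) − ∫₀ᵀ S(T−s) F(s, y_s) ds − Σ_{k=1}^{m} S(T−t_k) J_k(t_k, y(t_k)). Let B : U →L Z be continuous linear, and let Γ : Z → ([0,T] → U) be a linear map with sup_{s∈[0,T]} ‖(Γξ)(s)‖ ≤ K‖ξ‖ for all ξ ∈ Z. For bounded y : [−r,T] → Z (for which all Bochner integrals below exist), define (κ y)(t) = S(t)(ρ(0) − G(y_{τ₁},…,y_{τ_q})(0)) + ∫₀ᵗ S(t−s) B (Γ(L(y)))(s) ds + ∫₀ᵗ S(t−s) F(s, y_s) ds + Σ_{t_k < t} S(t−t_k) J_k(t_k, y(t_k)) for t ∈ [0,T]. Then, with 𝒞 = M·L·q + M·T·l + M·N, for all such y, ω and all t ∈ [0,T]: ‖(κ y)(t) − (κ ω)(t)‖ ≤ ( M·L·q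 + M·T·‖B‖·K·𝒞 + M·T·l + M·N ) · sup_{t∈[−r,T]} ‖y(t) − ω(t)‖. In particular, if M·L·q + M·T·‖B‖·K·𝒞 + M·T·l + M·N < 1, then κ is a contraction in the sup norm. -/
open MeasureTheory Set

/-- Contraction estimate for the solution-plus-control operator `κ` in the fixed-point
proof of exact controllability of the impulsive semilinear system with delays and
nonlocal conditions: with `𝒞 = MLq + MTl + MN`, the operator
`(κ y)(t) = S(t)(ρ(0) - G(y_{τ₁},…,y_{τ_q})(0)) + ∫₀ᵗ S(t-s) B (Γ(L(y)))(s) ds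
           + ∫₀ᵗ S(t-s) F(s, y_s) ds + Σ_{t_k < t} S(t-t_k) J_k(t_k, y(t_k))`
satisfies, for all `t ∈ [0,T]`,
`‖(κ y)(t) - (κ ω)(t)‖ ≤ (MLq + MT‖B‖K𝒞 + MTl + MN) · sup_{σ ∈ [-r,T]} ‖y(σ) - ω(σ)‖`;
in particular, if this constant is `< 1`, `κ` is a contraction in the sup norm. -/
theorem fixed_point_kappa_contraction {Z U : Type*}
    [NormedAddCommGroup Z] [NormedSpace ℝ Z] [CompleteSpace Z]
    [NormedAddCommGroup U] [NormedSpace ℝ U]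
    (T r : ℝ) (hT : 0 < T) (hr : 0 < r) (hrT : r < T)
    {q m : ℕ} (τ : Fin q → ℝ) (hτ : StrictMono τ)
    (hτ0 : ∀ i, 0 < τ i) (hτr : ∀ i, τ i < r)
    (tk : Fin m → ℝ) (htk : StrictMono tk)
    (htk0 : ∀ k, 0 < tk k) (htkT : ∀ k, tk k < T)
    (S : ℝ → Z →L[ℝ] Z) (M : ℝ) (hM : ∀ t ∈ Icc (0 : ℝ) T, ‖S t‖ ≤ M)
    (F : ℝ → (ℝ → Z) → Z) (l : ℝ) (hl : 0 ≤ l)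
    (hF : ∀ (t : ℝ) (ψ₁ ψ₂ : ℝ → Z),
      ‖F t ψ₁ - F t ψ₂‖ ≤ l * ⨆ θ : Icc (-r) (0 : ℝ), ‖ψ₁ θ - ψ₂ θ‖)
    (G : (Fin q → ℝ → Z) → ℝ → Z) (L : ℝ) (hL : 0 ≤ L)
    (hG : ∀ (φ ψ : Fin q → ℝ → Z) (s : ℝ), s ∈ Icc (-r) (0 : ℝ) →
      ‖G φ s - G ψ s‖ ≤ L * ∑ i, ‖φ i s - ψ i s‖)
    (J : Fin m → ℝ → Z → Z) (d : Fin m → ℝ) (hd : ∀ k, 0 ≤ d k)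
    (hJ : ∀ (k : Fin m) (t : ℝ) (y z : Z), ‖J k t y - J k t z‖ ≤ d k * ‖y - z‖)
    (ρ : ℝ → Z) (zs : Z)
    (𝓛 : (ℝ → Z) → Z)
    (h𝓛 : ∀ y : ℝ → Z, 𝓛 y =
      zs - S T (ρ 0 - G (fun i θ => y (τ i + θ)) 0)
        - (∫ s in (0 : ℝ)..T, S (T - s) (F s (fun θ => y (s + θ))))
        - ∑ k, S (T - tk k) (J k (tk k) (y (tk k))))
    (B : U →L[ℝ] Z) (Γ : Z →ₗ[ℝ] ℝ → U) (K : ℝ) (hK : 0 ≤ K)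
    (hΓ : ∀ (ξ : Z), ∀ s ∈ Icc (0 : ℝ) T, ‖Γ ξ s‖ ≤ K * ‖ξ‖)
    (κ : (ℝ → Z) → ℝ → Z)
    (hκ : ∀ (v : ℝ → Z) (t : ℝ), κ v t =
      S t (ρ 0 - G (fun i θ => v (τ i + θ)) 0)
        + (∫ s in (0 : ℝ)..t, S (t - s) (B (Γ (𝓛 v) s)))
        + (∫ s in (0 : ℝ)..t, S (t - s) (F s (fun θ => v (s + θ))))
        + ∑ k ∈ Finset.univ.filter (fun k => tk k < t),
            S (t - tk k) (J k (tk k) (v (tk k))))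
    (y ω : ℝ → Z)
    (hybdd : ∃ C, ∀ t ∈ Icc (-r) T, ‖y t‖ ≤ C)
    (hωbdd : ∃ C, ∀ t ∈ Icc (-r) T, ‖ω t‖ ≤ C)
    (hFy : ∀ t ∈ Icc (0 : ℝ) T, IntervalIntegrable
      (fun s => S (t - s) (F s (fun θ => y (s + θ)))) volume 0 t)
    (hFω : ∀ t ∈ Icc (0 : ℝ) T, IntervalIntegrable
      (fun s => S (t - s) (F s (fun θ => ω (s + θ)))) volume 0 t)
    (hBy : ∀ t ∈ Icc (0 : ℝ) T, IntervalIntegrable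
      (fun s => S (t - s) (B (Γ (𝓛 y) s))) volume 0 t)
    (hBω : ∀ t ∈ Icc (0 : ℝ) T, IntervalIntegrable
      (fun s => S (t - s) (B (Γ (𝓛 ω) s))) volume 0 t) :
    ∀ t ∈ Icc (0 : ℝ) T,
      ‖κ y t - κ ω t‖ ≤
        (M * L * q
            + M * T * ‖B‖ * K * (M * L * q + M * T * l + M * ∑ k, d k)
            + M * T * l + M * ∑ k, d k) *
          ⨆ σ : Icc (-r) T, ‖y σ - ω σ‖ := by
  intro t ht
  obtain ⟨C₁, hC₁⟩ := hybdd
  obtain ⟨C₂, hC₂⟩ := hωbdd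
  have hM0 : 0 ≤ M := le_trans (norm_nonneg _) (hM 0 ⟨le_refl _, hT.le⟩)
  haveI hne : Nonempty (Icc (-r) T) := ⟨⟨0, by constructor <;> linarith⟩⟩
  haveI hne0 : Nonempty (Icc (-r) (0 : ℝ)) := ⟨⟨0, by constructor <;> linarith⟩⟩
  set D := ⨆ σ : Icc (-r) T, ‖y σ - ω σ‖ with hDdef
  have hbdd : BddAbove (Set.range fun σ : Icc (-r) T => ‖y σ - ω σ‖) := by
    refine ⟨C₁ + C₂, ?_⟩
    rintro x ⟨σ, rfl⟩
    exact (norm_sub_le _ _).trans (add_le_add (hC₁ σ σ.2) (hC₂ σ σ.2))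
  have hDle : ∀ σ ∈ Icc (-r) T, ‖y σ - ω σ‖ ≤ D := fun σ hσ => le_ciSup hbdd ⟨σ, hσ⟩
  have hD0 : 0 ≤ D := Real.iSup_nonneg fun σ => norm_nonneg _
  -- bound on the G difference at 0
  have hGd : ‖G (fun i θ => y (τ i + θ)) 0 - G (fun i θ => ω (τ i + θ)) 0‖
      ≤ L * ((q : ℝ) * D) := by
    refine (hG (fun i θ => y (τ i + θ)) (fun i θ => ω (τ i + θ)) 0
      ⟨neg_nonpos.mpr hr.le, le_refl 0⟩).trans ?_
    refine mul_le_mul_of_nonneg_left ?_ hL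
    calc ∑ i, ‖y (τ i + 0) - ω (τ i + 0)‖
        ≤ ∑ _i : Fin q, D := by
          refine Finset.sum_le_sum fun i _ => ?_
          exact hDle _ ⟨by have := hτ0 i; linarith, by have h1 := hτr i; linarith⟩
      _ = (q : ℝ) * D := by simp [Finset.sum_const, nsmul_eq_mul]
  -- bound on the F difference
  have hFd : ∀ s, 0 ≤ s → s ≤ T →
      ‖F s (fun θ => y (s + θ)) - F s (fun θ => ω (s + θ))‖ ≤ l * D := by
    intro s hs0 hsT
    refine (hF s _ _).trans (mul_le_mul_of_nonneg_left ?_ hl)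
    refine ciSup_le fun θ => ?_
    exact hDle _ ⟨by have := θ.2.1; linarith, by have := θ.2.2; linarith⟩
  -- bound on the J differences
  have hJd : ∀ k : Fin m, ‖J k (tk k) (y (tk k)) - J k (tk k) (ω (tk k))‖ ≤ d k * D := by
    intro k
    refine (hJ k _ _ _).trans (mul_le_mul_of_nonneg_left ?_ (hd k))
    exact hDle _ ⟨by have := htk0 k; linarith, (htkT k).le⟩
  -- bound on the F integral difference
  have hFint : ∀ t', 0 ≤ t' → t' ≤ T →
      ‖(∫ s in (0 : ℝ)..t', S (t' - s) (F s (fun θ => y (s + θ)))) -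
        ∫ s in (0 : ℝ)..t', S (t' - s) (F s (fun θ => ω (s + θ)))‖ ≤ M * T * l * D := by
    intro t' ht0 htT
    rw [← intervalIntegral.integral_sub (hFy t' ⟨ht0, htT⟩) (hFω t' ⟨ht0, htT⟩)]
    have hb : ∀ s ∈ Set.uIoc (0 : ℝ) t',
        ‖S (t' - s) (F s (fun θ => y (s + θ))) - S (t' - s) (F s (fun θ => ω (s + θ)))‖
          ≤ M * (l * D) := by
      intro s hs
      rw [Set.uIoc_of_le ht0] at hs
      rw [← map_sub]
      refine ((S (t' - s)).le_opNorm _).trans ?_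
      exact mul_le_mul (hM _ ⟨by linarith [hs.2], by linarith [hs.1.le]⟩)
        (hFd s hs.1.le (hs.2.trans htT)) (norm_nonneg _) hM0
    refine (intervalIntegral.norm_integral_le_of_norm_le_const hb).trans ?_
    rw [sub_zero, abs_of_nonneg ht0]
    nlinarith [mul_nonneg hM0 (mul_nonneg hl hD0)]
  -- bound on the full jump sum difference
  have hSumT : ‖(∑ k, S (T - tk k) (J k (tk k) (y (tk k)))) -
      ∑ k, S (T - tk k) (J k (tk k) (ω (tk k)))‖ ≤ M * (∑ k, d k) * D := by
    rw [← Finset.sum_sub_distrib]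
    refine (norm_sum_le _ _).trans ?_
    calc ∑ k, ‖S (T - tk k) (J k (tk k) (y (tk k))) - S (T - tk k) (J k (tk k) (ω (tk k)))‖
        ≤ ∑ k, M * (d k * D) := by
          refine Finset.sum_le_sum fun k _ => ?_
          rw [← map_sub]
          refine ((S (T - tk k)).le_opNorm _).trans ?_
          exact mul_le_mul (hM _ ⟨by have := htkT k; linarith, by have := htk0 k; linarith⟩)
            (hJd k) (norm_nonneg _) hM0
      _ = M * (∑ k, d k) * D := by rw [← Finset.mul_sum, ← Finset.sum_mul, ← mul_assoc]
  -- bound on the 𝓛 difference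
  have h𝓛d : ‖𝓛 y - 𝓛 ω‖
      ≤ (M * L * (q : ℝ) + M * T * l + M * ∑ k, d k) * D := by
    rw [h𝓛 y, h𝓛 ω]
    have hre : (zs - S T (ρ 0 - G (fun i θ => y (τ i + θ)) 0)
          - (∫ s in (0 : ℝ)..T, S (T - s) (F s (fun θ => y (s + θ))))
          - ∑ k, S (T - tk k) (J k (tk k) (y (tk k))))
        - (zs - S T (ρ 0 - G (fun i θ => ω (τ i + θ)) 0)
          - (∫ s in (0 : ℝ)..T, S (T - s) (F s (fun θ => ω (s + θ))))
          - ∑ k, S (T - tk k) (J k (tk k) (ω (tk k))))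
      = (S T (ρ 0 - G (fun i θ => ω (τ i + θ)) 0) - S T (ρ 0 - G (fun i θ => y (τ i + θ)) 0))
        + ((∫ s in (0 : ℝ)..T, S (T - s) (F s (fun θ => ω (s + θ))))
            - (∫ s in (0 : ℝ)..T, S (T - s) (F s (fun θ => y (s + θ)))))
        + ((∑ k, S (T - tk k) (J k (tk k) (ω (tk k))))
            - ∑ k, S (T - tk k) (J k (tk k) (y (tk k)))) := by abel
    rw [hre]
    have h1 : ‖S T (ρ 0 - G (fun i θ => ω (τ i + θ)) 0)
        - S T (ρ 0 - G (fun i θ => y (τ i + θ)) 0)‖ ≤ M * (L * ((q : ℝ) * D)) := by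
      rw [← map_sub]
      refine ((S T).le_opNorm _).trans ?_
      refine mul_le_mul (hM T ⟨hT.le, le_refl T⟩) ?_ (norm_nonneg _) hM0
      have he : (ρ 0 - G (fun i θ => ω (τ i + θ)) 0) - (ρ 0 - G (fun i θ => y (τ i + θ)) 0)
          = G (fun i θ => y (τ i + θ)) 0 - G (fun i θ => ω (τ i + θ)) 0 := by abel
      rw [he]
      exact hGd
    have h2 := hFint T hT.le (le_refl T)
    rw [norm_sub_rev] at h2
    have h3 := hSumT
    rw [norm_sub_rev] at h3
    calc ‖_ + _ + _‖ ≤ ‖_ + _‖ + ‖_‖ := norm_add_le _ _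
      _ ≤ (‖_‖ + ‖_‖) + ‖_‖ := by gcongr; exact norm_add_le _ _
      _ ≤ M * (L * ((q : ℝ) * D)) + M * T * l * D + M * (∑ k, d k) * D :=
          add_le_add (add_le_add h1 h2) h3
      _ = (M * L * (q : ℝ) + M * T * l + M * ∑ k, d k) * D := by ring
  -- bound on the control integral difference
  have hBd : ‖(∫ s in (0 : ℝ)..t, S (t - s) (B (Γ (𝓛 y) s))) -
      ∫ s in (0 : ℝ)..t, S (t - s) (B (Γ (𝓛 ω) s))‖
      ≤ M * T * ‖B‖ * K * (M * L * (q : ℝ) + M * T * l + M * ∑ k, d k) * D := by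
    rw [← intervalIntegral.integral_sub (hBy t ht) (hBω t ht)]
    have hb : ∀ s ∈ Set.uIoc (0 : ℝ) t,
        ‖S (t - s) (B (Γ (𝓛 y) s)) - S (t - s) (B (Γ (𝓛 ω) s))‖
          ≤ M * (‖B‖ * (K * ((M * L * (q : ℝ) + M * T * l + M * ∑ k, d k) * D))) := by
      intro s hs
      rw [Set.uIoc_of_le ht.1] at hs
      have heq : S (t - s) (B (Γ (𝓛 y) s)) - S (t - s) (B (Γ (𝓛 ω) s))
          = S (t - s) (B (Γ (𝓛 y - 𝓛 ω) s)) := by simp [map_sub]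
      rw [heq]
      refine ((S (t - s)).le_opNorm _).trans ?_
      refine mul_le_mul (hM _ ⟨by linarith [hs.2], by linarith [hs.1.le, ht.2]⟩) ?_
        (norm_nonneg _) hM0
      refine (B.le_opNorm _).trans (mul_le_mul_of_nonneg_left ?_ (norm_nonneg B))
      exact (hΓ _ s ⟨hs.1.le, hs.2.trans ht.2⟩).trans (mul_le_mul_of_nonneg_left h𝓛d hK)
    refine (intervalIntegral.norm_integral_le_of_norm_le_const hb).trans ?_
    rw [sub_zero, abs_of_nonneg ht.1]
    have hC0 : 0 ≤ M * (‖B‖ * (K * ((M * L * (q : ℝ) + M * T * l + M * ∑ k, d k) * D))) := by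
      have hq : (0 : ℝ) ≤ (q : ℝ) := Nat.cast_nonneg q
      have hN : (0 : ℝ) ≤ ∑ k, d k := Finset.sum_nonneg fun k _ => hd k
      positivity
    nlinarith [mul_le_mul_of_nonneg_left ht.2 hC0]
  -- bound on the filtered jump sum difference
  have hSd : ‖(∑ k ∈ Finset.univ.filter (fun k => tk k < t),
        S (t - tk k) (J k (tk k) (y (tk k)))) -
      ∑ k ∈ Finset.univ.filter (fun k => tk k < t),
        S (t - tk k) (J k (tk k) (ω (tk k)))‖ ≤ M * (∑ k, d k) * D := by
    rw [← Finset.sum_sub_distrib]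
    refine (norm_sum_le _ _).trans ?_
    calc ∑ k ∈ Finset.univ.filter (fun k => tk k < t),
          ‖S (t - tk k) (J k (tk k) (y (tk k))) - S (t - tk k) (J k (tk k) (ω (tk k)))‖
        ≤ ∑ k ∈ Finset.univ.filter (fun k => tk k < t), M * (d k * D) := by
          refine Finset.sum_le_sum fun k hk => ?_
          have hkt : tk k < t := (Finset.mem_filter.mp hk).2
          rw [← map_sub]
          refine ((S (t - tk k)).le_opNorm _).trans ?_
          exact mul_le_mul (hM _ ⟨by linarith, by have := htk0 k; linarith [ht.2]⟩)
            (hJd k) (norm_nonneg _) hM0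
      _ ≤ ∑ k, M * (d k * D) := by
          refine Finset.sum_le_sum_of_subset_of_nonneg (Finset.filter_subset _ _)
            fun k _ _ => ?_
          exact mul_nonneg hM0 (mul_nonneg (hd k) hD0)
      _ = M * (∑ k, d k) * D := by rw [← Finset.mul_sum, ← Finset.sum_mul, ← mul_assoc]
  -- bound on the G term difference in κ
  have hA : ‖S t (ρ 0 - G (fun i θ => y (τ i + θ)) 0)
      - S t (ρ 0 - G (fun i θ => ω (τ i + θ)) 0)‖ ≤ M * (L * ((q : ℝ) * D)) := by
    rw [← map_sub]
    refine ((S t).le_opNorm _).trans ?_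
    refine mul_le_mul (hM t ht) ?_ (norm_nonneg _) hM0
    have he : (ρ 0 - G (fun i θ => y (τ i + θ)) 0) - (ρ 0 - G (fun i θ => ω (τ i + θ)) 0)
        = G (fun i θ => ω (τ i + θ)) 0 - G (fun i θ => y (τ i + θ)) 0 := by abel
    rw [he, norm_sub_rev]
    exact hGd
  have habcd : ∀ a b c d' a' b' c' d'' : Z,
      (a + b + c + d') - (a' + b' + c' + d'')
        = (a - a') + (b - b') + (c - c') + (d' - d'') := by intros; abel
  have norm4 : ∀ a b c d' : Z, ‖a + b + c + d'‖ ≤ ‖a‖ + ‖b‖ + ‖c‖ + ‖d'‖ := by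
    intro a b c d'
    have h1 := norm_add_le (a + b + c) d'
    have h2 := norm_add_le (a + b) c
    have h3 := norm_add_le a b
    linarith
  rw [hκ y t, hκ ω t, habcd]
  refine (norm4 _ _ _ _).trans ?_
  calc ‖S t (ρ 0 - G (fun i θ => y (τ i + θ)) 0)
        - S t (ρ 0 - G (fun i θ => ω (τ i + θ)) 0)‖
      + ‖(∫ s in (0 : ℝ)..t, S (t - s) (B (Γ (𝓛 y) s)))
          - ∫ s in (0 : ℝ)..t, S (t - s) (B (Γ (𝓛 ω) s))‖
      + ‖(∫ s in (0 : ℝ)..t, S (t - s) (F s (fun θ => y (s + θ))))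
          - ∫ s in (0 : ℝ)..t, S (t - s) (F s (fun θ => ω (s + θ)))‖
      + ‖(∑ k ∈ Finset.univ.filter (fun k => tk k < t),
            S (t - tk k) (J k (tk k) (y (tk k))))
          - ∑ k ∈ Finset.univ.filter (fun k => tk k < t),
            S (t - tk k) (J k (tk k) (ω (tk k)))‖
      ≤ M * (L * ((q : ℝ) * D))
        + M * T * ‖B‖ * K * (M * L * (q : ℝ) + M * T * l + M * ∑ k, d k) * D
        + M * T * l * D + M * (∑ k, d k) * D :=
        add_le_add (add_le_add (add_le_add hA hBd) (hFint t ht.1 ht.2)) hSd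
    _ = (M * L * (q : ℝ)
          + M * T * ‖B‖ * K * (M * L * (q : ℝ) + M * T * l + M * ∑ k, d k)
          + M * T * l + M * ∑ k, d k) * D := by ring
end

section
/- In the setting of the operator κ above (Banach space Z, normed space U, S : [0,T] → (Z →L Z), B : U →L Z, nonlinearities F, G, J_k, initial history ρ, target z*, steering operator Γ, and L(y) = z* − S(T)(ρ(0) − G(y_{τ₁},…,y_{τ_q})(0)) − ∫₀ᵀ S(T−s) F(s, y_s) ds − Σ_{k=1}^{m} S(T−t_k) J_k(t_k, y(t_k))), suppose additionally that Γ is a right inverse of the controllability map, i.e., for every ξ ∈ Z, ∫₀ᵀ S(T−s) B (Γξ)(s) ds = ξ. Then every fixed point y of κ (i.e., every y with (κ y)(t) = y(t) for all t ∈ [0,T]) satisfies y(T) = z*. -/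
open MeasureTheory Set

/-- If the steering operator `Γ` is a right inverse of the controllability map, i.e.
`∫₀ᵀ S(T-s) B (Γξ)(s) ds = ξ` for every `ξ`, then every fixed point `y` of the
solution-plus-control operator
`(κ y)(t) = S(t)(ρ(0) - G(y_{τ₁},…,y_{τ_q})(0)) + ∫₀ᵗ S(t-s) B (Γ(L(y)))(s) ds
           + ∫₀ᵗ S(t-s) F(s, y_s) ds + Σ_{t_k < t} S(t-t_k) J_k(t_k, y(t_k))`,
where `L(y) = z* - S(T)(ρ(0) - G(y_{τ₁},…,y_{τ_q})(0)) - ∫₀ᵀ S(T-s) F(s, y_s) ds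
             - Σ_{k=1}^m S(T-t_k) J_k(t_k, y(t_k))`,
satisfies `y(T) = z*`. -/
theorem fixed_point_reaches_target {Z U : Type*}
    [NormedAddCommGroup Z] [NormedSpace ℝ Z] [CompleteSpace Z]
    [NormedAddCommGroup U] [NormedSpace ℝ U]
    (T r : ℝ) (hT : 0 < T) (hr : 0 < r) (hrT : r < T)
    {q m : ℕ} (τ : Fin q → ℝ) (hτ : StrictMono τ)
    (hτ0 : ∀ i, 0 < τ i) (hτr : ∀ i, τ i < r)
    (tk : Fin m → ℝ) (htk : StrictMono tk)
    (htk0 : ∀ k, 0 < tk k) (htkT : ∀ k, tk k < T)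
    (S : ℝ → Z →L[ℝ] Z)
    (F : ℝ → (ℝ → Z) → Z)
    (G : (Fin q → ℝ → Z) → ℝ → Z)
    (J : Fin m → ℝ → Z → Z)
    (ρ : ℝ → Z) (zs : Z)
    (B : U →L[ℝ] Z) (Γ : Z →ₗ[ℝ] ℝ → U)
    (𝓛 : (ℝ → Z) → Z)
    (h𝓛 : ∀ y : ℝ → Z, 𝓛 y =
      zs - S T (ρ 0 - G (fun i θ => y (τ i + θ)) 0)
        - (∫ s in (0 : ℝ)..T, S (T - s) (F s (fun θ => y (s + θ))))
        - ∑ k, S (T - tk k) (J k (tk k) (y (tk k))))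
    (κ : (ℝ → Z) → ℝ → Z)
    (hκ : ∀ (v : ℝ → Z) (t : ℝ), κ v t =
      S t (ρ 0 - G (fun i θ => v (τ i + θ)) 0)
        + (∫ s in (0 : ℝ)..t, S (t - s) (B (Γ (𝓛 v) s)))
        + (∫ s in (0 : ℝ)..t, S (t - s) (F s (fun θ => v (s + θ))))
        + ∑ k ∈ Finset.univ.filter (fun k => tk k < t),
            S (t - tk k) (J k (tk k) (v (tk k))))
    (hright : ∀ ξ : Z, (∫ s in (0 : ℝ)..T, S (T - s) (B (Γ ξ s))) = ξ)
    (y : ℝ → Z)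
    (hfix : ∀ t ∈ Icc (0 : ℝ) T, κ y t = y t) :
    y T = zs := by
  have h := hfix T ⟨le_of_lt hT, le_refl T⟩
  rw [hκ, hright, h𝓛] at h
  have hfilt : Finset.univ.filter (fun k => tk k < T) = Finset.univ := by
    apply Finset.filter_true_of_mem; intro k _; exact htkT k
  rw [hfilt] at h
  rw [← h]; abel
end
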